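/- Let n ≥ 3 be an integer, set a = (n−2)/2, let δ be a real number with −a < δ ≤ 0, and let η be a real number with 0 ≤ η ≤ (a² − δ²)/2. Then the function f(t) = (cosh t)^δ satisfies, for every t ∈ ℝ, deriv^[2] f t − a²·f(t) + η·f(t) ≤ (1/2)·(δ² − a²)·f(t). -/

import Mathlib

open Real

lemma cosh_rpow_hasDerivAt (δ t : ℝ) :
    HasDerivAt (fun s : ℝ => Real.cosh s ^ δ)
      (δ * Real.cosh t ^ (δ - 1) * Real.sinh t) t := by
  have h := (Real.hasDerivAt_cosh t).rpow_const (p := δ) (Or.inl (Real.cosh_pos t).ne')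
  simpa [mul_comm, mul_assoc, mul_left_comm] using h

lemma cosh_rpow_deriv2 (δ t : ℝ) :
    deriv^[2] (fun s : ℝ => Real.cosh s ^ δ) t
      = δ ^ 2 * Real.cosh t ^ δ - δ * (δ - 1) * Real.cosh t ^ (δ - 2) := by
  have hd1 : deriv (fun s : ℝ => Real.cosh s ^ δ)
      = fun s : ℝ => δ * (Real.cosh s ^ (δ - 1) * Real.sinh s) := by
    funext s
    simpa [mul_assoc] using (cosh_rpow_hasDerivAt δ s).deriv
  have h2 : HasDerivAt (fun s : ℝ => δ * (Real.cosh s ^ (δ - 1) * Real.sinh s))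
      (δ * (((δ - 1) * Real.cosh t ^ (δ - 1 - 1) * Real.sinh t) * Real.sinh t
        + Real.cosh t ^ (δ - 1) * Real.cosh t)) t := by
    have := ((((Real.hasDerivAt_cosh t).rpow_const (p := δ - 1)
      (Or.inl (Real.cosh_pos t).ne')).mul (Real.hasDerivAt_sinh t)).const_mul δ)
    convert this using 2
    · rfl
    · rfl
    · rfl
    · ring
  have key : deriv^[2] (fun s : ℝ => Real.cosh s ^ δ) t
      = δ * (((δ - 1) * Real.cosh t ^ (δ - 1 - 1) * Real.sinh t) * Real.sinh t
        + Real.cosh t ^ (δ - 1) * Real.cosh t) := by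
    rw [Function.iterate_succ, Function.iterate_one, Function.comp_apply, hd1]
    exact h2.deriv
  rw [key]
  have hc := Real.cosh_pos t
  have hsq : Real.sinh t * Real.sinh t = Real.cosh t * Real.cosh t - 1 := by
    nlinarith [Real.cosh_sq t, sq_nonneg (Real.sinh t)]
  have e1 : Real.cosh t ^ (δ - 1) * Real.cosh t = Real.cosh t ^ δ := by
    rw [← Real.rpow_add_one hc.ne']; ring_nf
  have e2 : Real.cosh t ^ (δ - 2) * (Real.cosh t * Real.cosh t) = Real.cosh t ^ δ := by
    have : Real.cosh t * Real.cosh t = Real.cosh t ^ (2 : ℝ) := by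
      rw [Real.rpow_two]; ring
    rw [this, ← Real.rpow_add hc]; ring_nf
  have e3 : (δ - 1 - 1) = δ - 2 := by ring
  rw [e3, e1]
  linear_combination (δ * (δ - 1) * Real.cosh t ^ (δ - 2)) * hsq + (δ * (δ - 1)) * e2

/-- Barrier inequality for `(cosh t)^δ` with `−(n−2)/2 < δ ≤ 0`:
it is a supersolution of `∂_t² − a²` perturbed by a zeroth-order term `η`
with `0 ≤ η ≤ (a² − δ²)/2`. -/
theorem barrier_cosh_rpow
    (n : ℕ) (hn : 3 ≤ n) (a : ℝ) (ha : a = ((n : ℝ) - 2) / 2)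
    (δ : ℝ) (hδ₁ : -a < δ) (hδ₂ : δ ≤ 0)
    (η : ℝ) (hη₁ : 0 ≤ η) (hη₂ : η ≤ (a ^ 2 - δ ^ 2) / 2) (t : ℝ) :
    deriv^[2] (fun s : ℝ => Real.cosh s ^ δ) t - a ^ 2 * Real.cosh t ^ δ
        + η * Real.cosh t ^ δ
      ≤ (1 / 2) * (δ ^ 2 - a ^ 2) * Real.cosh t ^ δ := by
  rw [cosh_rpow_deriv2]
  have hc : (0 : ℝ) < Real.cosh t := Real.cosh_pos t
  have hp1 : (0 : ℝ) < Real.cosh t ^ δ := Real.rpow_pos_of_pos hc δ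
  have hp2 : (0 : ℝ) < Real.cosh t ^ (δ - 2) := Real.rpow_pos_of_pos hc _
  have hδδ : 0 ≤ δ * (δ - 1) := by nlinarith
  nlinarith [mul_nonneg hδδ hp2.le, mul_le_mul_of_nonneg_right hη₂ hp1.le]
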